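/- Σ_{λ∈Y} f_λ² z^{|λ|}/|λ|! = 1/(1−z) as formal power series, i.e., Σ_{λ⊢n} f_λ² = n! for every n ≥ 0. -/

import Mathlib

open Finset

namespace RSKaux

variable {μ ν ζ : YoungDiagram}

lemma eq_of_le_card (h : μ ≤ ν) (hc : ν.card ≤ μ.card) : μ = ν := by
  ext1; exact Finset.eq_of_subset_of_card_le h hc

lemma covBy_of_card (h : μ ≤ ν) (hc : ν.card = μ.card + 1) : μ ⋖ ν := by
  constructor
  · refine lt_of_le_of_ne h fun e => ?_
    subst e; omega
  · intro ζ h1 h2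
    have c1 : μ.card < ζ.card := Finset.card_lt_card h1
    have c2 : ζ.card < ν.card := Finset.card_lt_card h2
    omega

lemma exists_intermediate (h : μ < ν) :
    ∃ ζ : YoungDiagram, μ ≤ ζ ∧ ζ ≤ ν ∧ ζ.card = μ.card + 1 := by
  have hne : (ν.cells \ μ.cells).Nonempty := by
    rw [Finset.sdiff_nonempty]
    intro hsub
    exact absurd (le_antisymm h.le hsub) h.ne
  obtain ⟨c, hc, hmin⟩ := Finset.exists_min_image _ (fun c => c.1 + c.2) hne
  rw [Finset.mem_sdiff] at hc
  have hlow : IsLowerSet (↑(insert c μ.cells) : Set (ℕ × ℕ)) := by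
    rw [Finset.coe_insert]
    intro x y hyx hx
    rcases hx with rfl | hx
    · by_cases hy : y = x
      · exact Or.inl hy
      · right
        have hylt : y.1 + y.2 < x.1 + x.2 := by
          rcases Prod.mk_le_mk.mp hyx with ⟨h1, h2⟩
          rcases lt_or_eq_of_le h1 with h1 | h1
          · omega
          rcases lt_or_eq_of_le h2 with h2 | h2
          · omega
          exact absurd (Prod.ext h1 h2) hy
        have hyv : y ∈ ν := ν.isLowerSet hyx hc.1
        by_contra hym
        have := hmin y (Finset.mem_sdiff.mpr ⟨hyv, hym⟩)
        omega
    · exact Or.inr (μ.isLowerSet hyx hx)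
  refine ⟨⟨insert c μ.cells, hlow⟩, ?_, ?_, ?_⟩
  · intro x hx; exact Finset.mem_insert_of_mem hx
  · intro x hx
    rcases Finset.mem_insert.mp hx with rfl | hx
    · exact hc.1
    · exact h.le hx
  · simp [YoungDiagram.card, Finset.card_insert_of_notMem hc.2]

lemma card_of_covBy (h : μ ⋖ ν) : ν.card = μ.card + 1 := by
  obtain ⟨ζ, h1, h2, h3⟩ := exists_intermediate h.lt
  rcases eq_or_lt_of_le h2 with rfl | h2
  · exact h3
  · exact absurd h2 (h.2 (lt_of_le_of_ne h1 (by rintro rfl; omega)))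

lemma covBy_iff : μ ⋖ ν ↔ μ ≤ ν ∧ ν.card = μ.card + 1 :=
  ⟨fun h => ⟨h.le, card_of_covBy h⟩, fun h => covBy_of_card h.1 h.2⟩

lemma mem_lt_card {c : ℕ × ℕ} (h : c ∈ μ) : c.1 < μ.card ∧ c.2 < μ.card := by
  obtain ⟨i, j⟩ := c
  constructor
  · have h1 : i < μ.colLen j := YoungDiagram.mem_iff_lt_colLen.mp h
    have h2 : μ.colLen j = (μ.col j).card := μ.colLen_eq_card
    have h3 : (μ.col j).card ≤ μ.card := Finset.card_le_card (Finset.filter_subset _ _)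
    omega
  · have h1 : j < μ.rowLen i := YoungDiagram.mem_iff_lt_rowLen.mp h
    have h2 : μ.rowLen i = (μ.row i).card := μ.rowLen_eq_card
    have h3 : (μ.row i).card ≤ μ.card := Finset.card_le_card (Finset.filter_subset _ _)
    omega

lemma finite_card_eq (n : ℕ) : {ν : YoungDiagram | ν.card = n}.Finite := by
  rw [← Set.finite_coe_iff]
  refine Finite.of_injective
    (fun ν => (⟨ν.1.cells, ?_⟩ : ((Finset.range n ×ˢ Finset.range n).powerset : Finset _)))
    ?_
  · rw [Finset.mem_powerset]
    intro c hc
    have := mem_lt_card (μ := ν.1) hc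
    rw [ν.2] at this
    simpa [Finset.mem_product] using this
  · intro a b hab
    ext1
    ext1
    simpa using congrArg Subtype.val hab

instance finite_subtype_card (n : ℕ) : Finite {m : YoungDiagram // m.card = n} :=
  Set.finite_coe_iff.mpr (finite_card_eq n)

lemma finite_covers (μ : YoungDiagram) : {ν | μ ⋖ ν}.Finite :=
  (finite_card_eq (μ.card + 1)).subset (fun ν h => card_of_covBy h)

lemma finite_covered (μ : YoungDiagram) : {ν | ν ⋖ μ}.Finite := by
  refine (finite_card_eq (μ.card - 1)).subset (fun ν h => ?_)
  have := card_of_covBy h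
  simp only [Set.mem_setOf_eq]
  omega

noncomputable def covF (μ : YoungDiagram) : Finset YoungDiagram := (finite_covers μ).toFinset
noncomputable def lowF (μ : YoungDiagram) : Finset YoungDiagram := (finite_covered μ).toFinset

@[simp] lemma mem_covF : ν ∈ covF μ ↔ μ ⋖ ν := by simp [covF]
@[simp] lemma mem_lowF : ν ∈ lowF μ ↔ ν ⋖ μ := by simp [lowF]

end RSKaux
namespace RSKaux

open scoped Classical

variable {μ ν : YoungDiagram}

/-- Row `i` can receive a new box at the end. -/
def AddableRow (μ : YoungDiagram) (i : ℕ) : Prop :=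
  i = 0 ∨ μ.rowLen i < μ.rowLen (i - 1)

/-- Row `i` can lose its last box. -/
def RemovableRow (μ : YoungDiagram) (i : ℕ) : Prop :=
  μ.rowLen (i + 1) < μ.rowLen i

lemma addable_lower {i : ℕ} (h : AddableRow μ i) :
    IsLowerSet (↑(insert (i, μ.rowLen i) μ.cells) : Set (ℕ × ℕ)) := by
  rw [Finset.coe_insert]
  rintro ⟨p, q⟩ ⟨r, s⟩ hle hx
  obtain ⟨h1, h2⟩ := Prod.mk_le_mk.mp hle
  simp only [Set.mem_insert_iff, Prod.mk.injEq, Finset.mem_coe] at hx ⊢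
  rcases hx with ⟨h3, h4⟩ | hx
  · -- (p,q) = (i, rowLen i), (r,s) ≤ it
    rcases Nat.lt_or_ge r i with hr | hr
    · right
      rw [YoungDiagram.mem_cells, YoungDiagram.mem_iff_lt_rowLen]
      rcases h with h0 | h
      · omega
      · have : μ.rowLen (i - 1) ≤ μ.rowLen r := μ.rowLen_anti r (i - 1) (by omega)
        omega
    · rcases Nat.lt_or_ge s (μ.rowLen i) with hq | hq
      · have hri : r = i := by omega
        subst hri
        right
        rw [YoungDiagram.mem_cells, YoungDiagram.mem_iff_lt_rowLen]
        exact hq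
      · left
        omega
  · right
    exact μ.isLowerSet hle hx

lemma addable_not_mem {i : ℕ} : (i, μ.rowLen i) ∉ μ := by
  rw [YoungDiagram.mem_iff_lt_rowLen]; omega

noncomputable def growD (μ : YoungDiagram) (i : ℕ) : YoungDiagram :=
  if h : AddableRow μ i then ⟨insert (i, μ.rowLen i) μ.cells, addable_lower h⟩ else μ

lemma growD_cells {i : ℕ} (h : AddableRow μ i) :
    (growD μ i).cells = insert (i, μ.rowLen i) μ.cells := by
  rw [growD, dif_pos h]

lemma grow_covBy {i : ℕ} (h : AddableRow μ i) : μ ⋖ growD μ i := by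
  refine covBy_of_card ?_ ?_
  · intro c hc
    rw [← YoungDiagram.mem_cells, growD_cells h]
    exact Finset.mem_insert_of_mem hc
  · show (growD μ i).cells.card = _
    rw [growD_cells h, Finset.card_insert_of_notMem addable_not_mem]

lemma cover_eq_grow (h : μ ⋖ ν) : ∃ i, AddableRow μ i ∧ ν = growD μ i := by
  have hle : μ.cells ⊆ ν.cells := h.le
  have hcard : ν.cells.card = μ.cells.card + 1 := card_of_covBy h
  obtain ⟨c, hcν, hcμ⟩ := Finset.exists_of_ssubset (h.lt : μ.cells ⊂ ν.cells)
  have hins : ν.cells = insert c μ.cells := by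
    refine (Finset.eq_of_subset_of_card_le ?_ ?_).symm
    · exact Finset.insert_subset hcν hle
    · rw [Finset.card_insert_of_notMem hcμ]; omega
  obtain ⟨i, j⟩ := c
  have hj : j = μ.rowLen i := by
    have h1 : μ.rowLen i ≤ j := by
      by_contra hb
      exact hcμ (YoungDiagram.mem_iff_lt_rowLen.mpr (by omega))
    have h2 : ∀ b < j, (i, b) ∈ μ := by
      intro b hb
      have hm : (i, b) ∈ ν := ν.isLowerSet (Prod.mk_le_mk.mpr ⟨le_refl _, hb.le⟩) hcν
      have hm' : (i, b) ∈ ν.cells := hm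
      rw [hins, Finset.mem_insert, Prod.mk.injEq] at hm'
      rcases hm' with ⟨_, he⟩ | hm'
      · omega
      · exact hm'
    have h3 : j ≤ μ.rowLen i := by
      by_contra hb
      exact addable_not_mem (h2 (μ.rowLen i) (by omega))
    omega
  subst hj
  have hadd : AddableRow μ i := by
    rcases Nat.eq_zero_or_pos i with rfl | hi
    · exact Or.inl rfl
    · right
      have hm : (i - 1, μ.rowLen i) ∈ ν :=
        ν.isLowerSet (Prod.mk_le_mk.mpr ⟨by omega, le_refl _⟩) hcν
      have hm' : (i - 1, μ.rowLen i) ∈ ν.cells := hm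
      rw [hins, Finset.mem_insert, Prod.mk.injEq] at hm'
      rcases hm' with ⟨he, _⟩ | hm'
      · omega
      · have := YoungDiagram.mem_iff_lt_rowLen.mp hm'
        omega
  exact ⟨i, hadd, by ext1; rw [hins, growD_cells hadd]⟩

lemma grow_injOn {i i' : ℕ} (hi : AddableRow μ i) (hi' : AddableRow μ i')
    (hne : i ≠ i') : growD μ i ≠ growD μ i' := by
  intro he
  have h1 : (i, μ.rowLen i) ∈ (growD μ i).cells := by
    rw [growD_cells hi]; exact Finset.mem_insert_self _ _
  rw [he, growD_cells hi', Finset.mem_insert, Prod.mk.injEq] at h1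
  rcases h1 with ⟨he1, _⟩ | h1
  · exact hne he1
  · exact addable_not_mem h1

noncomputable def Arows (μ : YoungDiagram) : Finset ℕ :=
  (Finset.range (μ.colLen 0 + 1)).filter (fun i => AddableRow μ i)

lemma mem_Arows {i : ℕ} : i ∈ Arows μ ↔ AddableRow μ i := by
  rw [Arows, Finset.mem_filter, Finset.mem_range, and_iff_right_iff_imp]
  intro h
  rcases h with rfl | h
  · omega
  · have h0 : 0 < μ.rowLen (i - 1) := by omega
    have hm : (i - 1, 0) ∈ μ := YoungDiagram.mem_iff_lt_rowLen.mpr h0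
    have := YoungDiagram.mem_iff_lt_colLen.mp hm
    omega

lemma covF_eq_image : covF μ = (Arows μ).image (growD μ) := by
  ext ν
  rw [mem_covF, Finset.mem_image]
  constructor
  · intro h
    obtain ⟨i, hi, rfl⟩ := cover_eq_grow h
    exact ⟨i, mem_Arows.mpr hi, rfl⟩
  · rintro ⟨i, hi, rfl⟩
    exact grow_covBy (mem_Arows.mp hi)

lemma card_covF : (covF μ).card = (Arows μ).card := by
  rw [covF_eq_image]
  refine Finset.card_image_of_injOn ?_
  intro i hi j hj hij
  by_contra hne
  exact grow_injOn (mem_Arows.mp hi) (mem_Arows.mp hj) hne hij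

end RSKaux
namespace RSKaux

open scoped Classical

variable {μ ν : YoungDiagram}

lemma removable_mem {i : ℕ} (h : RemovableRow μ i) : (i, μ.rowLen i - 1) ∈ μ := by
  rw [YoungDiagram.mem_iff_lt_rowLen]
  have : 0 < μ.rowLen i := by unfold RemovableRow at h; omega
  omega

lemma removable_lower {i : ℕ} (h : RemovableRow μ i) :
    IsLowerSet (↑(μ.cells.erase (i, μ.rowLen i - 1)) : Set (ℕ × ℕ)) := by
  have h' : μ.rowLen (i + 1) < μ.rowLen i := h
  rintro ⟨p, q⟩ ⟨r, s⟩ hle hx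
  obtain ⟨h1, h2⟩ := Prod.mk_le_mk.mp hle
  simp only [Finset.coe_erase, Set.mem_diff, Finset.mem_coe, Set.mem_singleton_iff,
    Prod.mk.injEq, not_and] at hx ⊢
  obtain ⟨hpq, hne⟩ := hx
  refine ⟨μ.isLowerSet hle hpq, ?_⟩
  intro hri hs
  -- (r,s) = (i, rowLen i - 1), (r,s) ≤ (p,q) ∈ μ, (p,q) ≠ cell
  have hq : q < μ.rowLen p := YoungDiagram.mem_iff_lt_rowLen.mp hpq
  rcases Nat.lt_or_ge i p with hp | hp
  · have : μ.rowLen p ≤ μ.rowLen (i + 1) := μ.rowLen_anti (i + 1) p (by omega)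
    omega
  · have hpi : p = i := by omega
    rw [hpi] at hq
    exact hne hpi (by omega)

noncomputable def shrinkD (μ : YoungDiagram) (i : ℕ) : YoungDiagram :=
  if h : RemovableRow μ i then ⟨μ.cells.erase (i, μ.rowLen i - 1), removable_lower h⟩ else μ

lemma shrinkD_cells {i : ℕ} (h : RemovableRow μ i) :
    (shrinkD μ i).cells = μ.cells.erase (i, μ.rowLen i - 1) := by
  rw [shrinkD, dif_pos h]

lemma shrink_covBy {i : ℕ} (h : RemovableRow μ i) : shrinkD μ i ⋖ μ := by
  refine covBy_of_card ?_ ?_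
  · intro c hc
    rw [← YoungDiagram.mem_cells, shrinkD_cells h] at hc
    exact Finset.mem_of_mem_erase hc
  · show μ.cells.card = (shrinkD μ i).cells.card + 1
    rw [shrinkD_cells h, Finset.card_erase_of_mem (removable_mem h)]
    have : 0 < μ.cells.card := Finset.card_pos.mpr ⟨_, removable_mem h⟩
    omega

lemma cover_eq_shrink (h : ν ⋖ μ) : ∃ i, RemovableRow μ i ∧ ν = shrinkD μ i := by
  have hle : ν.cells ⊆ μ.cells := h.le
  have hcard : μ.cells.card = ν.cells.card + 1 := card_of_covBy h
  obtain ⟨c, hcμ, hcν⟩ := Finset.exists_of_ssubset (h.lt : ν.cells ⊂ μ.cells)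
  have hins : μ.cells = insert c ν.cells := by
    refine (Finset.eq_of_subset_of_card_le ?_ ?_).symm
    · exact Finset.insert_subset hcμ hle
    · rw [Finset.card_insert_of_notMem hcν]; omega
  obtain ⟨i, j⟩ := c
  have hup : ∀ p q : ℕ, (p, q) ∈ μ → (i, j) ≤ (p, q) → (p, q) = (i, j) := by
    intro p q hpq hlepq
    by_contra hne
    have : (p, q) ∈ ν.cells := by
      have : (p, q) ∈ μ.cells := hpq
      rw [hins, Finset.mem_insert] at this
      tauto
    exact hcν (ν.isLowerSet hlepq this)
  have hj1 : j + 1 = μ.rowLen i := by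
    have hjlt : j < μ.rowLen i := YoungDiagram.mem_iff_lt_rowLen.mp hcμ
    have : ¬ (i, j + 1) ∈ μ := by
      intro hmem
      have := hup i (j + 1) hmem (Prod.mk_le_mk.mpr ⟨le_refl _, by omega⟩)
      simp only [Prod.mk.injEq] at this
      omega
    rw [YoungDiagram.mem_iff_lt_rowLen] at this
    omega
  have hrem : RemovableRow μ i := by
    show μ.rowLen (i + 1) < μ.rowLen i
    have : ¬ (i + 1, j) ∈ μ := by
      intro hmem
      have := hup (i + 1) j hmem (Prod.mk_le_mk.mpr ⟨by omega, le_refl _⟩)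
      simp only [Prod.mk.injEq] at this
      omega
    rw [YoungDiagram.mem_iff_lt_rowLen] at this
    omega
  refine ⟨i, hrem, ?_⟩
  ext1
  rw [shrinkD_cells hrem]
  have hji : j = μ.rowLen i - 1 := by omega
  subst hji
  rw [hins, Finset.erase_insert hcν]

lemma shrink_injOn {i i' : ℕ} (hi : RemovableRow μ i) (hi' : RemovableRow μ i')
    (hne : i ≠ i') : shrinkD μ i ≠ shrinkD μ i' := by
  intro he
  have h1 : (i, μ.rowLen i - 1) ∉ (shrinkD μ i).cells := by
    rw [shrinkD_cells hi]; exact Finset.notMem_erase _ _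
  rw [he, shrinkD_cells hi'] at h1
  exact h1 (Finset.mem_erase.mpr ⟨by simp [Prod.ext_iff]; omega, removable_mem hi⟩)

noncomputable def Rrows (μ : YoungDiagram) : Finset ℕ :=
  (Finset.range (μ.colLen 0)).filter (fun i => RemovableRow μ i)

lemma mem_Rrows {i : ℕ} : i ∈ Rrows μ ↔ RemovableRow μ i := by
  rw [Rrows, Finset.mem_filter, Finset.mem_range, and_iff_right_iff_imp]
  intro h
  have h0 : 0 < μ.rowLen i := by unfold RemovableRow at h; omega
  have hm : (i, 0) ∈ μ := YoungDiagram.mem_iff_lt_rowLen.mpr h0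
  exact YoungDiagram.mem_iff_lt_colLen.mp hm

lemma lowF_eq_image : lowF μ = (Rrows μ).image (shrinkD μ) := by
  classical
  ext ν
  rw [mem_lowF, Finset.mem_image]
  constructor
  · intro h
    obtain ⟨i, hi, rfl⟩ := cover_eq_shrink h
    exact ⟨i, mem_Rrows.mpr hi, rfl⟩
  · rintro ⟨i, hi, rfl⟩
    exact shrink_covBy (mem_Rrows.mp hi)

lemma card_lowF : (lowF μ).card = (Rrows μ).card := by
  rw [lowF_eq_image]
  refine Finset.card_image_of_injOn ?_
  intro i hi j hj hij
  by_contra hne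
  exact shrink_injOn (mem_Rrows.mp hi) (mem_Rrows.mp hj) hne hij

lemma Arows_eq : Arows μ = insert 0 ((Rrows μ).image (· + 1)) := by
  classical
  ext i
  rw [mem_Arows, Finset.mem_insert, Finset.mem_image]
  constructor
  · intro h
    rcases Nat.eq_zero_or_pos i with rfl | hi
    · exact Or.inl rfl
    · right
      refine ⟨i - 1, mem_Rrows.mpr ?_, by omega⟩
      show μ.rowLen (i - 1 + 1) < μ.rowLen (i - 1)
      rcases h with h | h
      · omega
      · have : i - 1 + 1 = i := by omega
        rw [this]
        exact h
  · rintro (rfl | ⟨k, hk, rfl⟩)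
    · exact Or.inl rfl
    · right
      have := mem_Rrows.mp hk
      unfold RemovableRow at this
      have h1 : k + 1 - 1 = k := by omega
      rw [h1]
      exact this

/-- The differential-poset identity at each vertex: one more cover above than below. -/
lemma card_covF_eq : (covF μ).card = (lowF μ).card + 1 := by
  classical
  rw [card_covF, card_lowF, Arows_eq, Finset.card_insert_of_notMem, 
    Finset.card_image_of_injective _ (fun a b => by omega)]
  simp
end RSKaux
namespace RSKaux

open scoped Classical

variable {μ ν l : YoungDiagram}

lemma bot_of_card_zero (h : μ.card = 0) : μ = ⊥ := by
  ext1
  rw [Finset.card_eq_zero] at h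
  simp [h]

lemma card_sup_inf (μ ν : YoungDiagram) :
    (μ ⊔ ν).cells.card + (μ ⊓ ν).cells.card = μ.cells.card + ν.cells.card :=
  Finset.card_union_add_card_inter μ.cells ν.cells

lemma up_unique (h1 : μ ⋖ l) (h2 : ν ⋖ l) (hne : μ ≠ ν) : l = μ ⊔ ν := by
  have hc1 : l.cells.card = μ.cells.card + 1 := card_of_covBy h1
  have hc2 : l.cells.card = ν.cells.card + 1 := card_of_covBy h2
  have hsup : μ ⊔ ν ≤ l := sup_le h1.le h2.le
  have hlt : μ < μ ⊔ ν := by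
    refine lt_of_le_of_ne le_sup_left fun he => ?_
    have hle : ν ≤ μ := he ▸ le_sup_right
    exact hne (eq_of_le_card hle (show μ.cells.card ≤ ν.cells.card by omega)).symm
  have hx1 := Finset.card_lt_card (hlt : μ.cells ⊂ (μ ⊔ ν).cells)
  have hx2 := Finset.card_le_card (hsup : (μ ⊔ ν).cells ⊆ l.cells)
  exact (eq_of_le_card hsup (show l.cells.card ≤ (μ ⊔ ν).cells.card by omega)).symm

lemma low_unique (h1 : l ⋖ μ) (h2 : l ⋖ ν) (hne : μ ≠ ν) : l = μ ⊓ ν := by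
  have hc1 : μ.cells.card = l.cells.card + 1 := card_of_covBy h1
  have hc2 : ν.cells.card = l.cells.card + 1 := card_of_covBy h2
  have hinf : l ≤ μ ⊓ ν := le_inf h1.le h2.le
  have hlt : μ ⊓ ν < μ := by
    refine lt_of_le_of_ne inf_le_left fun he => ?_
    have hle : μ ≤ ν := he ▸ inf_le_right
    exact hne (eq_of_le_card hle (show ν.cells.card ≤ μ.cells.card by omega))
  have hx1 := Finset.card_lt_card (hlt : (μ ⊓ ν).cells ⊂ μ.cells)
  have hx2 := Finset.card_le_card (hinf : l.cells ⊆ (μ ⊓ ν).cells)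
  exact eq_of_le_card hinf (show (μ ⊓ ν).cells.card ≤ l.cells.card by omega)

lemma up_iff_low (hne : μ ≠ ν) :
    (∃ l, μ ⋖ l ∧ ν ⋖ l) ↔ (∃ l, l ⋖ μ ∧ l ⋖ ν) := by
  have hsi := card_sup_inf μ ν
  constructor
  · rintro ⟨l, h1, h2⟩
    have hc1 : l.cells.card = μ.cells.card + 1 := card_of_covBy h1
    have hc2 : l.cells.card = ν.cells.card + 1 := card_of_covBy h2
    have hl : l = μ ⊔ ν := up_unique h1 h2 hne
    subst hl
    have hm0 : 0 < μ.cells.card := by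
      by_contra h0
      push_neg at h0
      exact hne ((bot_of_card_zero (show μ.card = 0 by omega)).trans
        (bot_of_card_zero (show ν.card = 0 by omega)).symm)
    exact ⟨μ ⊓ ν, covBy_of_card inf_le_left (show μ.cells.card = (μ ⊓ ν).cells.card + 1 by omega),
      covBy_of_card inf_le_right (show ν.cells.card = (μ ⊓ ν).cells.card + 1 by omega)⟩
  · rintro ⟨l, h1, h2⟩
    have hc1 : μ.cells.card = l.cells.card + 1 := card_of_covBy h1
    have hc2 : ν.cells.card = l.cells.card + 1 := card_of_covBy h2
    have hl : l = μ ⊓ ν := low_unique h1 h2 hne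
    subst hl
    exact ⟨μ ⊔ ν, covBy_of_card le_sup_left (show (μ ⊔ ν).cells.card = μ.cells.card + 1 by omega),
      covBy_of_card le_sup_right (show (μ ⊔ ν).cells.card = ν.cells.card + 1 by omega)⟩

/-- The key local identity (differential poset property in counting form). -/
lemma key_count (μ ν : YoungDiagram) :
    ((covF μ).filter (fun l => ν ⋖ l)).card =
      ((lowF μ).filter (fun l => l ⋖ ν)).card + (if ν = μ then 1 else 0) := by
  rcases eq_or_ne ν μ with rfl | hne
  · rw [if_pos rfl, Finset.filter_true_of_mem (fun l hl => mem_covF.mp hl),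
      Finset.filter_true_of_mem (fun l hl => mem_lowF.mp hl)]
    exact card_covF_eq
  · rw [if_neg hne]
    by_cases hex : ∃ l, μ ⋖ l ∧ ν ⋖ l
    · obtain ⟨l₀, hl₀⟩ := hex
      obtain ⟨l₁, hl₁⟩ := (up_iff_low (Ne.symm hne)).mp ⟨l₀, hl₀⟩
      have e1 : (covF μ).filter (fun l => ν ⋖ l) = {μ ⊔ ν} := by
        ext l
        rw [Finset.mem_filter, mem_covF, Finset.mem_singleton]
        constructor
        · rintro ⟨ha, hb⟩
          exact up_unique ha hb (Ne.symm hne)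
        · rintro rfl
          exact ⟨up_unique hl₀.1 hl₀.2 (Ne.symm hne) ▸ hl₀.1,
            up_unique hl₀.1 hl₀.2 (Ne.symm hne) ▸ hl₀.2⟩
      have e2 : (lowF μ).filter (fun l => l ⋖ ν) = {μ ⊓ ν} := by
        ext l
        rw [Finset.mem_filter, mem_lowF, Finset.mem_singleton]
        constructor
        · rintro ⟨ha, hb⟩
          exact low_unique ha hb (Ne.symm hne)
        · rintro rfl
          exact ⟨low_unique hl₁.1 hl₁.2 (Ne.symm hne) ▸ hl₁.1,
            low_unique hl₁.1 hl₁.2 (Ne.symm hne) ▸ hl₁.2⟩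
      rw [e1, e2]
      simp
    · have hex2 : ¬ ∃ l, l ⋖ μ ∧ l ⋖ ν := by
        rw [← up_iff_low (Ne.symm hne)]
        exact hex
      rw [Finset.filter_eq_empty_iff.mpr, Finset.filter_eq_empty_iff.mpr]
      · simp
      · intro l hl
        exact fun hc => hex2 ⟨l, mem_lowF.mp hl, hc⟩
      · intro l hl
        exact fun hc => hex ⟨l, mem_covF.mp hl, hc⟩

end RSKaux
namespace RSKaux

open scoped Classical

variable {μ ν : YoungDiagram}

/-- The free module on Young's lattice. -/
abbrev M := YoungDiagram →₀ ℕ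

/-- The up operator. -/
noncomputable def Uop : Module.End ℕ M :=
  Finsupp.lsum ℕ fun μ => (LinearMap.id : ℕ →ₗ[ℕ] ℕ).smulRight (∑ ν ∈ covF μ, Finsupp.single ν 1)

/-- The down operator. -/
noncomputable def Dop : Module.End ℕ M :=
  Finsupp.lsum ℕ fun μ => (LinearMap.id : ℕ →ₗ[ℕ] ℕ).smulRight (∑ ν ∈ lowF μ, Finsupp.single ν 1)

lemma sum_over_eq (s : Finset YoungDiagram) (p : YoungDiagram → Prop)
    (hs : ∀ lam, lam ∈ s ↔ p lam) (x : M) (g : YoungDiagram → ℕ) :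
    ∑ lam ∈ s, x lam * g lam = ∑ lam ∈ x.support, if p lam then x lam * g lam else 0 := by
  rw [← Finset.sum_filter]
  refine (Finset.sum_subset (fun lam hl => (hs lam).mpr (Finset.mem_filter.mp hl).2) ?_).symm
  intro lam hl hn
  have hx : x lam = 0 := by
    by_contra hx
    exact hn (Finset.mem_filter.mpr ⟨Finsupp.mem_support_iff.mpr hx, (hs lam).mp hl⟩)
  rw [hx, zero_mul]

lemma Uop_apply (x : M) (ν : YoungDiagram) : Uop x ν = ∑ lam ∈ lowF ν, x lam := by
  have h2 := sum_over_eq (lowF ν) (fun lam => lam ⋖ ν) (fun lam => mem_lowF) x (fun _ => 1)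
  simp only [mul_one] at h2
  rw [h2, Uop, Finsupp.lsum_apply, Finsupp.sum_apply, Finsupp.sum]
  refine Finset.sum_congr rfl fun μ hμ => ?_
  rw [LinearMap.smulRight_apply, LinearMap.id_apply, Finsupp.smul_apply, Finset.sum_apply']
  simp only [Finsupp.single_apply]
  rw [Finset.sum_ite_eq' (covF μ) ν (fun _ => 1)]
  simp only [mem_covF]
  by_cases h : μ ⋖ ν <;> simp [h]

lemma Dop_apply (x : M) (ν : YoungDiagram) : Dop x ν = ∑ lam ∈ covF ν, x lam := by
  have h2 := sum_over_eq (covF ν) (fun lam => ν ⋖ lam) (fun lam => mem_covF) x (fun _ => 1)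
  simp only [mul_one] at h2
  rw [h2, Dop, Finsupp.lsum_apply, Finsupp.sum_apply, Finsupp.sum]
  refine Finset.sum_congr rfl fun μ hμ => ?_
  rw [LinearMap.smulRight_apply, LinearMap.id_apply, Finsupp.smul_apply, Finset.sum_apply']
  simp only [Finsupp.single_apply]
  rw [Finset.sum_ite_eq' (lowF μ) ν (fun _ => 1)]
  simp only [mem_lowF]
  by_cases h : ν ⋖ μ <;> simp [h]

lemma DU_op : Dop * Uop = Uop * Dop + 1 := by
  refine Finsupp.lhom_ext fun μ c => ?_
  have h1 : (Finsupp.single μ c : M) = c • Finsupp.single μ 1 := by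
    rw [Finsupp.smul_single, smul_eq_mul, mul_one]
  rw [h1, map_smul, map_smul]
  congr 1
  ext ν
  rw [Module.End.mul_apply, LinearMap.add_apply, Module.End.mul_apply, Module.End.one_apply,
    Dop_apply, Finsupp.add_apply]
  have hL : ∑ lam ∈ covF ν, Uop (Finsupp.single μ 1) lam
      = ((covF ν).filter (fun l => μ ⋖ l)).card := by
    rw [Finset.card_filter]
    refine Finset.sum_congr rfl fun lam _ => ?_
    rw [Uop_apply]
    simp only [Finsupp.single_apply]
    rw [Finset.sum_ite_eq (lowF lam) μ (fun _ => 1)]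
    simp only [mem_lowF]
  have hR : Uop (Dop (Finsupp.single μ 1)) ν
      = ((lowF ν).filter (fun l => l ⋖ μ)).card := by
    rw [Uop_apply, Finset.card_filter]
    refine Finset.sum_congr rfl fun lam _ => ?_
    rw [Dop_apply]
    simp only [Finsupp.single_apply]
    rw [Finset.sum_ite_eq (covF lam) μ (fun _ => 1)]
    simp only [mem_covF]
  rw [hL, hR, Finsupp.single_apply]
  have := key_count ν μ
  rcases eq_or_ne μ ν with rfl | hne
  · simp only [if_pos rfl] at this ⊢
    omega
  · rw [if_neg hne] at this ⊢
    omega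

lemma DU_pow (n : ℕ) : Dop * Uop ^ (n + 1) = Uop ^ (n + 1) * Dop + (n + 1) • Uop ^ n := by
  induction n with
  | zero => simpa using DU_op
  | succ n ih =>
    have h1 : Uop ^ (n + 2) = Uop ^ (n + 1) * Uop := pow_succ _ _
    rw [h1, ← mul_assoc, ih, add_mul, mul_assoc, DU_op, mul_add, mul_one,
      ← mul_assoc, ← pow_succ, smul_mul_assoc, ← pow_succ]
    have hs : (n + 1 + 1) • Uop ^ (n + 1) = (n + 1) • Uop ^ (n + 1) + Uop ^ (n + 1) :=
      succ_nsmul _ _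
    rw [hs]
    abel

/-- The basis vector at the empty diagram. -/
noncomputable def δ : M := Finsupp.single ⊥ 1

lemma Dop_delta : Dop δ = 0 := by
  ext ν
  rw [Dop_apply]
  rw [Finsupp.coe_zero, Pi.zero_apply]
  refine Finset.sum_eq_zero fun lam hl => ?_
  rw [δ, Finsupp.single_apply, if_neg]
  intro h
  subst h
  exact absurd (mem_covF.mp hl).lt (by simp)

lemma DnUn (n : ℕ) : (Dop ^ n) ((Uop ^ n) δ) = n.factorial • δ := by
  induction n with
  | zero => simp
  | succ n ih =>
    have h1 : (Uop ^ (n + 1)) δ = (Uop ^ (n + 1)) δ := rfl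
    have h2 : (Dop ^ (n + 1)) ((Uop ^ (n + 1)) δ) = (Dop ^ n) (Dop ((Uop ^ (n + 1)) δ)) := by
      rw [pow_succ, Module.End.mul_apply]
    have h3 : Dop ((Uop ^ (n + 1)) δ) = (n + 1) • (Uop ^ n) δ := by
      have := congrArg (fun (T : Module.End ℕ M) => T δ) (DU_pow n)
      simp only [Module.End.mul_apply, LinearMap.add_apply, LinearMap.smul_apply] at this
      rw [this]
      rw [Dop_delta, map_zero, zero_add]
    rw [h2, h3, map_smul, ih, Nat.factorial_succ, mul_smul]
  
end RSKaux
namespace RSKaux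

open scoped Classical

/-- Coefficientwise pairing. -/
noncomputable def pairF (x y : M) : ℕ := ∑ μ ∈ x.support, x μ * y μ

lemma pairF_eq_sum (x y : M) (s : Finset YoungDiagram)
    (hs : ∀ μ, x μ ≠ 0 → y μ ≠ 0 → μ ∈ s) : pairF x y = ∑ μ ∈ s, x μ * y μ := by
  have h1 : pairF x y = ∑ μ ∈ x.support ∪ s, x μ * y μ := by
    refine Finset.sum_subset Finset.subset_union_left fun μ _ hn => ?_
    have : x μ = 0 := by
      by_contra hx
      exact hn (Finsupp.mem_support_iff.mpr hx)
    rw [this, zero_mul]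
  have h2 : ∑ μ ∈ s, x μ * y μ = ∑ μ ∈ x.support ∪ s, x μ * y μ := by
    refine Finset.sum_subset Finset.subset_union_right fun μ _ hn => ?_
    rcases Classical.em (x μ = 0) with hx | hx
    · rw [hx, zero_mul]
    rcases Classical.em (y μ = 0) with hy | hy
    · rw [hy, mul_zero]
    exact absurd (hs μ hx hy) hn
  rw [h1, ← h2]

lemma pairF_adj (x y : M) : pairF (Uop x) y = pairF x (Dop y) := by
  have hL : pairF (Uop x) y = ∑ ν ∈ y.support, Uop x ν * y ν := by
    refine pairF_eq_sum _ _ _ fun μ _ hy => Finsupp.mem_support_iff.mpr hy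
  rw [hL]
  have hL2 : ∀ ν, Uop x ν * y ν
      = ∑ lam ∈ x.support, if lam ⋖ ν then x lam * y ν else 0 := by
    intro ν
    rw [Uop_apply, Finset.sum_mul]
    exact sum_over_eq (lowF ν) (fun lam => lam ⋖ ν) (fun lam => mem_lowF) x (fun _ => y ν)
  rw [Finset.sum_congr rfl fun ν _ => hL2 ν, Finset.sum_comm]
  rw [pairF]
  refine Finset.sum_congr rfl fun lam _ => ?_
  rw [Dop_apply, Finset.mul_sum]
  have := sum_over_eq (covF lam) (fun ν => lam ⋖ ν) (fun ν => mem_covF) y (fun _ => x lam)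
  calc ∑ ν ∈ y.support, (if lam ⋖ ν then x lam * y ν else 0)
      = ∑ ν ∈ y.support, (if lam ⋖ ν then y ν * x lam else 0) := by
        refine Finset.sum_congr rfl fun ν _ => ?_
        rw [mul_comm]
    _ = ∑ ν ∈ covF lam, y ν * x lam := this.symm
    _ = ∑ ν ∈ covF lam, x lam * y ν := by
        refine Finset.sum_congr rfl fun ν _ => ?_
        rw [mul_comm]

lemma pairF_adj_pow (n : ℕ) (x y : M) : pairF ((Uop ^ n) x) y = pairF x ((Dop ^ n) y) := by
  induction n generalizing x with
  | zero => simp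
  | succ n ih =>
    have h1 : (Uop ^ (n + 1)) x = (Uop ^ n) (Uop x) := by
      rw [pow_succ, Module.End.mul_apply]
    have h2 : (Dop ^ (n + 1)) y = Dop ((Dop ^ n) y) := by
      rw [pow_succ', Module.End.mul_apply]
    rw [h1, ih (Uop x), pairF_adj, ← h2]

lemma pairF_delta (z : M) : pairF δ z = z ⊥ := by
  rw [pairF, δ, Finsupp.support_single_ne_zero _ one_ne_zero, Finset.sum_singleton,
    Finsupp.single_eq_same, one_mul]

end RSKaux
namespace RSKaux

open scoped Classical

variable {μ ν : YoungDiagram}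

/-- The type of saturated chains from `⊥` to `μ`. -/
def Ch (μ : YoungDiagram) :=
  {l : List YoungDiagram // l.Chain' (· ⋖ ·) ∧ l.head? = some ⊥ ∧ l.getLast? = some μ}

lemma Ch_bot_eq (x : Ch ⊥) : x.1 = [⊥] := by
  obtain ⟨l, hc, hh, hl⟩ := x
  have hne : l ≠ [] := by rintro rfl; simp at hh
  have hlast : l.getLast hne = ⊥ := by
    have h := List.getLast?_eq_getLast hne
    rw [h] at hl
    exact Option.some.inj hl
  have hsplit : l.dropLast ++ [(⊥ : YoungDiagram)] = l := by
    conv_rhs => rw [← List.dropLast_append_getLast hne]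
    rw [hlast]
  rcases eq_or_ne l.dropLast [] with h0 | h0
  · rw [h0, List.nil_append] at hsplit
    exact hsplit.symm
  · exfalso
    have hc2 : (l.dropLast ++ [(⊥ : YoungDiagram)]).Chain' (· ⋖ ·) := by rw [hsplit]; exact hc
    replace hc2 := List.isChain_append.mp hc2
    obtain ⟨_, _, c3⟩ := hc2
    have hlast' := List.getLast?_eq_getLast h0
    have hlam : l.dropLast.getLast h0 ⋖ ⊥ := c3 _ (Option.mem_def.mpr hlast') ⊥ rfl
    exact absurd hlam.lt (by simp)

noncomputable def GG (μ : YoungDiagram) :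
    (Σ lam : {lam : YoungDiagram // lam ⋖ μ}, Ch lam.1) → Ch μ
  | ⟨⟨lam, hlam⟩, ⟨l, hc, hh, hl⟩⟩ =>
    ⟨l ++ [μ], by
      refine ⟨List.IsChain.append hc (List.isChain_singleton μ) ?_, ?_, List.getLast?_concat⟩
      · intro a ha b hb
        rw [Option.mem_def, hl] at ha
        simp only [List.head?_cons, Option.mem_def, Option.some.injEq] at hb
        have ha' : a = lam := (Option.some.inj ha).symm
        subst ha'
        subst hb
        exact hlam
      · rw [List.head?_append, hh]
        rfl⟩

lemma GG_inj : Function.Injective (GG μ) := by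
  rintro ⟨⟨lam, hlam⟩, ⟨l, hc, hh, hl⟩⟩ ⟨⟨lam', hlam'⟩, ⟨m, hc', hh', hl'⟩⟩ he
  have h1 : l ++ [μ] = m ++ [μ] := congrArg Subtype.val he
  have h2 : l = m := by simpa using h1
  subst h2
  have h3 : lam = lam' := by
    rw [hl] at hl'
    exact Option.some.inj hl'
  subst h3
  rfl

lemma GG_surj (hμ : μ ≠ ⊥) : Function.Surjective (GG μ) := by
  rintro ⟨l, hc, hh, hl⟩
  have hne : l ≠ [] := by rintro rfl; simp at hh
  have hlast : l.getLast hne = μ := by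
    have h := List.getLast?_eq_getLast hne
    rw [h] at hl
    exact Option.some.inj hl
  have hsplit : l.dropLast ++ [μ] = l := by
    conv_rhs => rw [← List.dropLast_append_getLast hne]
    rw [hlast]
  have hne' : l.dropLast ≠ [] := by
    intro h0
    rw [h0, List.nil_append] at hsplit
    rw [← hsplit] at hh
    simp only [List.head?_cons, Option.some.injEq] at hh
    exact hμ hh
  have hc2 : (l.dropLast ++ [μ]).Chain' (· ⋖ ·) := by rw [hsplit]; exact hc
  replace hc2 := List.isChain_append.mp hc2
  obtain ⟨c1, _, c3⟩ := hc2
  have hlast' := List.getLast?_eq_getLast hne'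
  have hlam : l.dropLast.getLast hne' ⋖ μ := c3 _ (Option.mem_def.mpr hlast') μ rfl
  have hh' : l.dropLast.head? = some ⊥ := by
    obtain ⟨a, t, hat⟩ : ∃ a t, l.dropLast = a :: t := by
      cases h : l.dropLast with
      | nil => exact absurd h hne'
      | cons a t => exact ⟨a, t, rfl⟩
    rw [← hsplit, hat] at hh
    rw [hat]
    simpa using hh
  refine ⟨⟨⟨l.dropLast.getLast hne', hlam⟩, ⟨l.dropLast, c1, hh', hlast'⟩⟩, ?_⟩
  exact Subtype.ext hsplit

instance finite_cov_subtype (μ : YoungDiagram) : Finite {lam : YoungDiagram // lam ⋖ μ} :=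
  (finite_covered μ).to_subtype

lemma finite_Ch : ∀ (n : ℕ) (μ : YoungDiagram), μ.card = n → Finite (Ch μ) := by
  intro n
  induction n using Nat.strong_induction_on with
  | _ n ih =>
    intro μ hn
    rcases eq_or_ne μ ⊥ with rfl | hμ
    · have : Subsingleton (Ch ⊥) :=
        ⟨fun a b => Subtype.ext ((Ch_bot_eq a).trans (Ch_bot_eq b).symm)⟩
      exact Finite.of_subsingleton
    · have hfib : ∀ lam : {lam : YoungDiagram // lam ⋖ μ}, Finite (Ch lam.1) := by
        intro lam
        have hcc : lam.1.cells.card + 1 = μ.cells.card := (card_of_covBy lam.2).symm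
        have hnn : μ.cells.card = n := hn
        have hbr : lam.1.card = lam.1.cells.card := rfl
        exact ih lam.1.card (by omega) lam.1 rfl
      haveI := hfib
      haveI : Finite (Σ lam : {lam : YoungDiagram // lam ⋖ μ}, Ch lam.1) := by infer_instance
      exact Finite.of_surjective (GG μ) (GG_surj hμ)

instance : Finite (Ch μ) := finite_Ch μ.card μ rfl

lemma card_Ch_bot : Nat.card (Ch ⊥) = 1 := by
  rw [Nat.card_eq_one_iff_unique]
  constructor
  · exact ⟨fun a b => Subtype.ext ((Ch_bot_eq a).trans (Ch_bot_eq b).symm)⟩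
  · exact ⟨⟨[⊥], List.isChain_singleton ⊥, rfl, rfl⟩⟩

lemma card_Ch_rec (hμ : μ ≠ ⊥) :
    Nat.card (Ch μ) = ∑ lam ∈ lowF μ, Nat.card (Ch lam) := by
  rw [← Nat.card_eq_of_bijective (GG μ) ⟨GG_inj, GG_surj hμ⟩]
  letI : Fintype {lam : YoungDiagram // lam ⋖ μ} := Fintype.ofFinite _
  letI : ∀ lam : {lam : YoungDiagram // lam ⋖ μ}, Fintype (Ch lam.1) :=
    fun lam => Fintype.ofFinite _
  rw [Nat.card_eq_fintype_card, Fintype.card_sigma]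
  simp_rw [← Nat.card_eq_fintype_card]
  rw [← Finset.sum_subtype (lowF μ) (fun lam => mem_lowF) (fun lam => Nat.card (Ch lam))]

lemma g_succ (n : ℕ) : ((Uop ^ (n + 1)) δ) μ = ∑ lam ∈ lowF μ, ((Uop ^ n) δ) lam := by
  rw [pow_succ', Module.End.mul_apply, Uop_apply]

lemma fSYT_eq : ∀ (n : ℕ) (μ : YoungDiagram), μ.card = n → Nat.card (Ch μ) = ((Uop ^ n) δ) μ := by
  intro n
  induction n using Nat.strong_induction_on with
  | _ n ih =>
    intro μ hn
    rcases eq_or_ne μ ⊥ with rfl | hμ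
    · have hn0 : n = 0 := by
        rw [← hn]
        rfl
      subst hn0
      rw [card_Ch_bot]
      simp [δ]
    · have hn0 : n ≠ 0 := by
        intro h0
        exact hμ (bot_of_card_zero (hn.trans h0))
      obtain ⟨m, rfl⟩ := Nat.exists_eq_succ_of_ne_zero hn0
      rw [card_Ch_rec hμ, g_succ]
      refine Finset.sum_congr rfl fun lam hl => ?_
      have hcov := mem_lowF.mp hl
      have hcc : lam.cells.card + 1 = μ.cells.card := (card_of_covBy hcov).symm
      have hnn : μ.cells.card = m + 1 := hn
      have hbr : lam.card = lam.cells.card := rfl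
      exact ih m (by omega) lam (by omega)

lemma g_card : ∀ (n : ℕ) (μ : YoungDiagram), ((Uop ^ n) δ) μ ≠ 0 → μ.card = n := by
  intro n
  induction n with
  | zero =>
    intro μ h
    simp only [pow_zero, Module.End.one_apply, δ, Finsupp.single_apply] at h
    split at h
    · next he => rw [← he]; rfl
    · exact absurd rfl h
  | succ n ih =>
    intro μ h
    rw [g_succ] at h
    obtain ⟨lam, hl, hne⟩ := Finset.exists_ne_zero_of_sum_ne_zero h
    have h1 := ih lam hne
    have h2 : lam.cells.card + 1 = μ.cells.card := (card_of_covBy (mem_lowF.mp hl)).symm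
    have h3 : lam.cells.card = n := h1
    show μ.cells.card = n + 1
    omega

end RSKaux
/-- The number of standard Young tableaux of shape `μ`, counted as the number
of saturated chains from `∅` to `μ` in Young's lattice. -/
noncomputable def fSYT (μ : YoungDiagram) : ℕ :=
  Nat.card {l : List YoungDiagram //
    l.Chain' (· ⋖ ·) ∧ l.head? = some ⊥ ∧ l.getLast? = some μ}

/-- The RSK identity: `Σ_{λ⊢n} f_λ² = n!`. -/
theorem stmt_15 (n : ℕ) :
    ∑ᶠ lam : {m : YoungDiagram // m.card = n}, (fSYT lam.1) ^ 2 = n.factorial := by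
  classical
  open RSKaux in
  letI : Fintype {m : YoungDiagram // m.card = n} := Fintype.ofFinite _
  rw [finsum_eq_sum_of_fintype]
  have hf : ∀ lam : {m : YoungDiagram // m.card = n}, fSYT lam.1 = ((Uop ^ n) δ) lam.1 :=
    fun lam => fSYT_eq n lam.1 lam.2
  calc ∑ lam : {m : YoungDiagram // m.card = n}, (fSYT lam.1) ^ 2
      = ∑ lam : {m : YoungDiagram // m.card = n}, ((Uop ^ n) δ) lam.1 * ((Uop ^ n) δ) lam.1 := by
        refine Finset.sum_congr rfl fun lam _ => ?_
        rw [hf lam, sq]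
    _ = ∑ μ ∈ (finite_card_eq n).toFinset, ((Uop ^ n) δ) μ * ((Uop ^ n) δ) μ := by
        rw [Finset.sum_subtype (p := fun m : YoungDiagram => m.card = n)
          ((finite_card_eq n).toFinset)
          (fun μ => by rw [Set.Finite.mem_toFinset]; exact Iff.rfl)
          (fun μ => ((Uop ^ n) δ) μ * ((Uop ^ n) δ) μ)]
    _ = pairF ((Uop ^ n) δ) ((Uop ^ n) δ) := by
        refine (pairF_eq_sum _ _ _ fun μ hx _ => ?_).symm
        rw [Set.Finite.mem_toFinset]
        exact g_card n μ hx
    _ = pairF δ ((Dop ^ n) ((Uop ^ n) δ)) := pairF_adj_pow n δ _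
    _ = ((Dop ^ n) ((Uop ^ n) δ)) ⊥ := pairF_delta _
    _ = n.factorial := by
        rw [DnUn, Finsupp.smul_apply, δ, Finsupp.single_eq_same, smul_eq_mul, mul_one]
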